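/- Worst-case starting point matches stationarity: under (HP1)–(HP3), sup over t > T_n of | (max_{y ∈ X_n} ℙ_{δ_y}(τ_{x_n} > t)) / ℙ_{π_n}(τ_{x_n} > t) − 1 | → 0 as n → ∞. -/

import Mathlib

open Finset Filter

/-- The kernel of the chain killed at `x`: all entries from or to `x` are set to zero.
For `y, z ≠ x` the powers of `killed P x` agree with the powers of the principal
submatrix `[P]_x` of `P` obtained by deleting the row and the column indexed by `x`. -/
def killed {n : ℕ} (P : Matrix (Fin n) (Fin n) ℝ) (x : Fin n) :
    Matrix (Fin n) (Fin n) ℝ :=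
  Matrix.of fun y z => if y = x ∨ z = x then 0 else P y z

/-- The no-hit probability `ℙ_α(τ_x > t) = Σ_{y ≠ x} Σ_{z ≠ x} α(y)·([P]_x)^t(y,z)`. -/
def noHit {n : ℕ} (P : Matrix (Fin n) (Fin n) ℝ) (x : Fin n)
    (a : Fin n → ℝ) (t : ℕ) : ℝ :=
  ∑ y ∈ Finset.univ.erase x, ∑ z ∈ Finset.univ.erase x, a y * ((killed P x) ^ t) y z

/-- The expected number of returns to `x` within time `T`:
`R_T(x) = Σ_{t=0}^{T} P^t(x,x)`. -/
def returns {n : ℕ} (P : Matrix (Fin n) (Fin n) ℝ) (x : Fin n) (T : ℕ) : ℝ :=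
  ∑ t ∈ Finset.range (T + 1), (P ^ t) x x

namespace WCS

variable {n : ℕ} (P : Matrix (Fin n) (Fin n) ℝ) (x : Fin n) (pi : Fin n → ℝ)

/-- the distribution at time `s` of the chain started from `pi` and killed at `x` -/
def qf (s : ℕ) (y : Fin n) : ℝ :=
  ∑ w ∈ Finset.univ.erase x, pi w * ((killed P x) ^ s) w y

variable {P x pi}

lemma killed_nonneg (hnn : ∀ y z, 0 ≤ P y z) (y z : Fin n) : 0 ≤ killed P x y z := by
  unfold killed
  simp only [Matrix.of_apply]
  split
  · exact le_rfl
  · exact hnn y z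

lemma killed_le (hnn : ∀ y z, 0 ≤ P y z) (y z : Fin n) : killed P x y z ≤ P y z := by
  unfold killed
  simp only [Matrix.of_apply]
  split
  · exact hnn y z
  · exact le_rfl

lemma ppow_nonneg (hnn : ∀ y z, 0 ≤ P y z) (t : ℕ) (y z : Fin n) : 0 ≤ (P ^ t) y z := by
  induction t generalizing y z with
  | zero =>
    rw [pow_zero, Matrix.one_apply]
    split <;> norm_num
  | succ t ih =>
    rw [pow_succ, Matrix.mul_apply]
    exact Finset.sum_nonneg fun u _ => mul_nonneg (ih y u) (hnn u z)

lemma kpow_nonneg (hnn : ∀ y z, 0 ≤ P y z) (t : ℕ) (y z : Fin n) :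
    0 ≤ ((killed P x) ^ t) y z := by
  induction t generalizing y z with
  | zero =>
    rw [pow_zero, Matrix.one_apply]
    split <;> norm_num
  | succ t ih =>
    rw [pow_succ, Matrix.mul_apply]
    exact Finset.sum_nonneg fun u _ => mul_nonneg (ih y u) (killed_nonneg hnn u z)

lemma kpow_le (hnn : ∀ y z, 0 ≤ P y z) (t : ℕ) (y z : Fin n) :
    ((killed P x) ^ t) y z ≤ (P ^ t) y z := by
  induction t generalizing y z with
  | zero => rw [pow_zero, pow_zero]
  | succ t ih =>
    rw [pow_succ, pow_succ, Matrix.mul_apply, Matrix.mul_apply]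
    exact Finset.sum_le_sum fun u _ =>
      mul_le_mul (ih y u) (killed_le hnn u z) (killed_nonneg hnn u z) (ppow_nonneg hnn t y u)

lemma kpow_col (t : ℕ) {w : Fin n} (hw : w ≠ x) : ((killed P x) ^ t) w x = 0 := by
  cases t with
  | zero => rw [pow_zero]; exact Matrix.one_apply_ne hw
  | succ t =>
    rw [pow_succ, Matrix.mul_apply]
    apply Finset.sum_eq_zero
    intro u _
    have : killed P x u x = 0 := by unfold killed; simp
    rw [this, mul_zero]

lemma kpow_row (t : ℕ) {z : Fin n} (hz : z ≠ x) : ((killed P x) ^ t) x z = 0 := by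
  cases t with
  | zero => rw [pow_zero]; exact Matrix.one_apply_ne (Ne.symm hz)
  | succ t =>
    rw [pow_succ', Matrix.mul_apply]
    apply Finset.sum_eq_zero
    intro u _
    have : killed P x x u = 0 := by unfold killed; simp
    rw [this, zero_mul]

lemma qf_nonneg (hnn : ∀ y z, 0 ≤ P y z) (hpinn : ∀ y, 0 ≤ pi y) (s : ℕ) (y : Fin n) :
    0 ≤ qf P x pi s y :=
  Finset.sum_nonneg fun w _ => mul_nonneg (hpinn w) (kpow_nonneg hnn s w y)

lemma qf_x (s : ℕ) : qf P x pi s x = 0 := by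
  apply Finset.sum_eq_zero
  intro w hw
  rw [kpow_col s (Finset.mem_erase.mp hw).1, mul_zero]

lemma qf_add (r m : ℕ) (y : Fin n) :
    qf P x pi (r + m) y = ∑ u, qf P x pi r u * ((killed P x) ^ m) u y := by
  unfold qf
  simp only [pow_add, Matrix.mul_apply, Finset.mul_sum, Finset.sum_mul]
  rw [Finset.sum_comm]
  apply Finset.sum_congr rfl
  intro u _
  apply Finset.sum_congr rfl
  intro w _
  ring

lemma noHit_eq_qf (t : ℕ) : noHit P x pi t = ∑ y, qf P x pi t y := by
  rw [← Finset.sum_erase_add Finset.univ _ (Finset.mem_univ x), qf_x, add_zero]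
  unfold noHit qf
  rw [Finset.sum_comm]


lemma qf_le_pi (hnn : ∀ y z, 0 ≤ P y z) (hpinn : ∀ y, 0 ≤ pi y)
    (hst : ∀ z, ∑ w, pi w * P w z = pi z) (s : ℕ) (y : Fin n) :
    qf P x pi s y ≤ pi y := by
  induction s generalizing y with
  | zero =>
    unfold qf
    rw [pow_zero]
    simp only [Matrix.one_apply, mul_ite, mul_one, mul_zero]
    rw [Finset.sum_ite_eq' (Finset.univ.erase x) y pi]
    split
    · exact le_rfl
    · exact hpinn y
  | succ s ih =>
    have h := qf_add (P := P) (x := x) (pi := pi) s 1 y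
    rw [pow_one] at h
    rw [h]
    calc ∑ u, qf P x pi s u * killed P x u y
        ≤ ∑ u, pi u * P u y := by
          apply Finset.sum_le_sum
          intro u _
          exact mul_le_mul (ih u) (killed_le hnn u y) (killed_nonneg hnn u y) (hpinn u)
      _ = pi y := hst y

lemma noHit_nonneg (hnn : ∀ y z, 0 ≤ P y z) (hpinn : ∀ y, 0 ≤ pi y) (t : ℕ) :
    0 ≤ noHit P x pi t :=
  Finset.sum_nonneg fun y _ => Finset.sum_nonneg fun z _ =>
    mul_nonneg (hpinn y) (kpow_nonneg hnn t y z)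

lemma killed_row_sum (hrow : ∀ y, ∑ z, P y z = 1) {u : Fin n} (hu : u ≠ x) :
    ∑ y, killed P x u y = 1 - P u x := by
  rw [← Finset.sum_erase_add Finset.univ _ (Finset.mem_univ x)]
  have h1 : killed P x u x = 0 := by unfold killed; simp
  have h2 : ∑ y ∈ Finset.univ.erase x, killed P x u y
      = ∑ y ∈ Finset.univ.erase x, P u y := by
    apply Finset.sum_congr rfl
    intro y hy
    unfold killed
    simp [hu, (Finset.mem_erase.mp hy).1]
  have h3 : ∑ y ∈ Finset.univ.erase x, P u y + P u x = 1 := by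
    rw [Finset.sum_erase_add Finset.univ _ (Finset.mem_univ x)]
    exact hrow u
  rw [h1, h2, add_zero]
  linarith

lemma noHit_succ (hrow : ∀ y, ∑ z, P y z = 1) (s : ℕ) :
    noHit P x pi (s + 1) = noHit P x pi s - ∑ u, qf P x pi s u * P u x := by
  rw [noHit_eq_qf, noHit_eq_qf]
  have h : ∀ y, qf P x pi (s + 1) y = ∑ u, qf P x pi s u * killed P x u y := by
    intro y
    have := qf_add (P := P) (x := x) (pi := pi) s 1 y
    rwa [pow_one] at this
  calc ∑ y, qf P x pi (s+1) y
      = ∑ y, ∑ u, qf P x pi s u * killed P x u y := by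
        exact Finset.sum_congr rfl fun y _ => h y
    _ = ∑ u, ∑ y, qf P x pi s u * killed P x u y := Finset.sum_comm
    _ = ∑ u, qf P x pi s u * ∑ y, killed P x u y := by
        exact Finset.sum_congr rfl fun u _ => (Finset.mul_sum _ _ _).symm
    _ = ∑ u, (qf P x pi s u - qf P x pi s u * P u x) := by
        apply Finset.sum_congr rfl
        intro u _
        by_cases hu : u = x
        · subst hu
          rw [qf_x]
          ring
        · rw [killed_row_sum hrow hu]
          ring
    _ = ∑ y, qf P x pi s y - ∑ u, qf P x pi s u * P u x := Finset.sum_sub_distrib _ _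

lemma diff_nonneg (hnn : ∀ y z, 0 ≤ P y z) (hpinn : ∀ y, 0 ≤ pi y) (s : ℕ) :
    0 ≤ ∑ u, qf P x pi s u * P u x :=
  Finset.sum_nonneg fun u _ => mul_nonneg (qf_nonneg hnn hpinn s u) (hnn u x)

lemma diff_le_pix (hnn : ∀ y z, 0 ≤ P y z) (hpinn : ∀ y, 0 ≤ pi y)
    (hst : ∀ z, ∑ w, pi w * P w z = pi z) (s : ℕ) :
    ∑ u, qf P x pi s u * P u x ≤ pi x := by
  calc ∑ u, qf P x pi s u * P u x
      ≤ ∑ u, pi u * P u x := Finset.sum_le_sum fun u _ =>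
        mul_le_mul_of_nonneg_right (qf_le_pi hnn hpinn hst s u) (hnn u x)
    _ = pi x := hst x

lemma noHit_antitone (hnn : ∀ y z, 0 ≤ P y z) (hpinn : ∀ y, 0 ≤ pi y)
    (hrow : ∀ y, ∑ z, P y z = 1) : Antitone (noHit P x pi) := by
  apply antitone_nat_of_succ_le
  intro s
  rw [noHit_succ hrow]
  linarith [diff_nonneg (x := x) (pi := pi) hnn hpinn s]

lemma noHit_zero (hpisum : ∑ y, pi y = 1) : noHit P x pi 0 = 1 - pi x := by
  unfold noHit
  rw [pow_zero]
  have h : ∀ y ∈ Finset.univ.erase x, ∑ z ∈ Finset.univ.erase x, pi y * (1 : Matrix (Fin n) (Fin n) ℝ) y z = pi y := by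
    intro y hy
    simp only [Matrix.one_apply, mul_ite, mul_one, mul_zero]
    rw [Finset.sum_ite_eq (Finset.univ.erase x) y fun _ => pi y]
    simp [hy]
  rw [Finset.sum_congr rfl h]
  have := Finset.sum_erase_add Finset.univ pi (Finset.mem_univ x)
  rw [hpisum] at this
  linarith

lemma noHit_lower (hnn : ∀ y z, 0 ≤ P y z) (hpinn : ∀ y, 0 ≤ pi y)
    (hrow : ∀ y, ∑ z, P y z = 1) (hpisum : ∑ y, pi y = 1)
    (hst : ∀ z, ∑ w, pi w * P w z = pi z) (t : ℕ) :
    1 - ((t : ℝ) + 1) * pi x ≤ noHit P x pi t := by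
  induction t with
  | zero =>
    rw [noHit_zero hpisum]
    norm_num
  | succ t ih =>
    rw [noHit_succ hrow]
    have := diff_le_pix (x := x) hnn hpinn hst t
    push_cast
    linarith

lemma qf_mix {T : ℕ} {η : ℝ} (hnn : ∀ y z, 0 ≤ P y z) (hpinn : ∀ y, 0 ≤ pi y)
    (hmix : ∀ y z, (P ^ T) y z ≤ (1 + η) * pi z)
    {s : ℕ} (hs : T ≤ s) (y : Fin n) :
    qf P x pi s y ≤ (1 + η) * pi y * noHit P x pi (s - T) := by
  have hdec : s - T + T = s := Nat.sub_add_cancel hs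
  have h := qf_add (P := P) (x := x) (pi := pi) (s - T) T y
  rw [hdec] at h
  rw [h, noHit_eq_qf]
  calc ∑ u, qf P x pi (s - T) u * ((killed P x) ^ T) u y
      ≤ ∑ u, qf P x pi (s - T) u * ((1 + η) * pi y) := by
        apply Finset.sum_le_sum
        intro u _
        exact mul_le_mul_of_nonneg_left ((kpow_le hnn T u y).trans (hmix u y))
          (qf_nonneg hnn hpinn _ u)
    _ = (1 + η) * pi y * ∑ u, qf P x pi (s - T) u := by
        rw [Finset.mul_sum]
        exact Finset.sum_congr rfl fun u _ => by ring

lemma diff_mix {T : ℕ} {η : ℝ} (hnn : ∀ y z, 0 ≤ P y z) (hpinn : ∀ y, 0 ≤ pi y)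
    (hrow : ∀ y, ∑ z, P y z = 1)
    (hst : ∀ z, ∑ w, pi w * P w z = pi z)
    (hmix : ∀ y z, (P ^ T) y z ≤ (1 + η) * pi z)
    {s : ℕ} (hs : T ≤ s) :
    noHit P x pi s - noHit P x pi (s + 1) ≤ (1 + η) * pi x * noHit P x pi (s - T) := by
  rw [noHit_succ hrow]
  have key : ∑ u, qf P x pi s u * P u x
      ≤ (1 + η) * noHit P x pi (s - T) * ∑ u, pi u * P u x := by
    rw [Finset.mul_sum]
    apply Finset.sum_le_sum
    intro u _
    have h1 := qf_mix (x := x) hnn hpinn hmix hs u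
    calc qf P x pi s u * P u x
        ≤ ((1 + η) * pi u * noHit P x pi (s - T)) * P u x :=
          mul_le_mul_of_nonneg_right h1 (hnn u x)
      _ = (1 + η) * noHit P x pi (s - T) * (pi u * P u x) := by ring
  rw [hst x] at key
  linarith


lemma tele_sum (f : ℕ → ℝ) (m : ℕ) : ∀ k : ℕ,
    ∑ i ∈ Finset.range k, (f (m + i) - f (m + i + 1)) = f m - f (m + k) := by
  intro k
  induction k with
  | zero => simp
  | succ k ih =>
    rw [Finset.sum_range_succ, ih]
    have h : m + (k + 1) = m + k + 1 := by omega
    rw [h]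
    ring

lemma noHit_delta (t : ℕ) (y : Fin n) :
    noHit P x (fun z => if z = y then (1 : ℝ) else 0) t
      = if y = x then 0 else ∑ z ∈ Finset.univ.erase x, ((killed P x) ^ t) y z := by
  unfold noHit
  have h : ∀ y' ∈ Finset.univ.erase x,
      (∑ z ∈ Finset.univ.erase x, (if y' = y then (1:ℝ) else 0) * ((killed P x) ^ t) y' z)
        = if y' = y then (∑ z ∈ Finset.univ.erase x, ((killed P x) ^ t) y' z) else 0 := by
    intro y' _
    split <;> simp
  rw [Finset.sum_congr rfl h, Finset.sum_ite_eq' (Finset.univ.erase x) y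
    (fun y' => ∑ z ∈ Finset.univ.erase x, ((killed P x) ^ t) y' z)]
  by_cases hy : y = x
  · simp [hy]
  · simp [hy, Finset.mem_erase]

lemma delta_le {T : ℕ} {η : ℝ} (hnn : ∀ y z, 0 ≤ P y z) (hpinn : ∀ y, 0 ≤ pi y)
    (hη : 0 ≤ η) (hmix : ∀ y z, (P ^ T) y z ≤ (1 + η) * pi z)
    {t : ℕ} (ht : T ≤ t) (y : Fin n) :
    noHit P x (fun z => if z = y then (1 : ℝ) else 0) t
      ≤ (1 + η) * noHit P x pi (t - T) := by
  rw [noHit_delta]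
  split
  · exact mul_nonneg (by linarith) (noHit_nonneg hnn hpinn _)
  · have hdec : T + (t - T) = t := by omega
    have hpoweq : (killed P x) ^ t = (killed P x) ^ T * (killed P x) ^ (t - T) := by
      rw [← pow_add, hdec]
    have hsplit : ∀ z, ((killed P x) ^ t) y z
        = ∑ u, ((killed P x) ^ T) y u * ((killed P x) ^ (t - T)) u z := by
      intro z
      rw [hpoweq, Matrix.mul_apply]
    calc ∑ z ∈ Finset.univ.erase x, ((killed P x) ^ t) y z
        = ∑ z ∈ Finset.univ.erase x, ∑ u, ((killed P x) ^ T) y u * ((killed P x) ^ (t-T)) u z :=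
          Finset.sum_congr rfl fun z _ => hsplit z
      _ = ∑ u, ∑ z ∈ Finset.univ.erase x, ((killed P x) ^ T) y u * ((killed P x) ^ (t-T)) u z :=
          Finset.sum_comm
      _ = ∑ u, ((killed P x) ^ T) y u * ∑ z ∈ Finset.univ.erase x, ((killed P x) ^ (t-T)) u z :=
          Finset.sum_congr rfl fun u _ => (Finset.mul_sum _ _ _).symm
      _ ≤ ∑ u, ((1 + η) * pi u) * ∑ z ∈ Finset.univ.erase x, ((killed P x) ^ (t-T)) u z := by
          apply Finset.sum_le_sum
          intro u _
          exact mul_le_mul_of_nonneg_right ((kpow_le hnn T y u).trans (hmix y u))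
            (Finset.sum_nonneg fun z _ => kpow_nonneg hnn _ u z)
      _ = (1 + η) * ∑ u, pi u * ∑ z ∈ Finset.univ.erase x, ((killed P x) ^ (t-T)) u z := by
          rw [Finset.mul_sum]
          exact Finset.sum_congr rfl fun u _ => by ring
      _ = (1 + η) * noHit P x pi (t - T) := by
          congr 1
          rw [← Finset.sum_erase_add Finset.univ _ (Finset.mem_univ x)]
          have hx0 : ∑ z ∈ Finset.univ.erase x, ((killed P x) ^ (t-T)) x z = 0 :=
            Finset.sum_eq_zero fun z hz => kpow_row _ (Finset.mem_erase.mp hz).1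
          rw [hx0, mul_zero, add_zero]
          unfold noHit
          exact Finset.sum_congr rfl fun u _ => Finset.mul_sum _ _ _

lemma pi_le_sup (hnn : ∀ y z, 0 ≤ P y z) (hpinn : ∀ y, 0 ≤ pi y)
    (hpisum : ∑ y, pi y = 1) (t : ℕ) :
    noHit P x pi t ≤ ⨆ y : Fin n, noHit P x (fun z => if z = y then (1 : ℝ) else 0) t := by
  classical
  set S := ⨆ y : Fin n, noHit P x (fun z => if z = y then (1 : ℝ) else 0) t with hSdef
  have hbdd : BddAbove (Set.range fun y : Fin n =>
      noHit P x (fun z => if z = y then (1 : ℝ) else 0) t) :=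
    Set.Finite.bddAbove (Set.finite_range _)
  have hS0 : 0 ≤ S := by
    have h0 : noHit P x (fun z => if z = x then (1 : ℝ) else 0) t = 0 := by
      rw [noHit_delta]; simp
    have := le_ciSup hbdd x
    rw [h0] at this
    exact this
  calc noHit P x pi t
      = ∑ y ∈ Finset.univ.erase x, pi y *
          (∑ z ∈ Finset.univ.erase x, ((killed P x) ^ t) y z) := by
        unfold noHit
        exact Finset.sum_congr rfl fun y _ => (Finset.mul_sum _ _ _).symm
    _ = ∑ y ∈ Finset.univ.erase x, pi y *
          noHit P x (fun z => if z = y then (1 : ℝ) else 0) t := by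
        apply Finset.sum_congr rfl
        intro y hy
        rw [noHit_delta]
        simp only [(Finset.mem_erase.mp hy).1, if_false]
    _ ≤ ∑ y ∈ Finset.univ.erase x, pi y * S := by
        apply Finset.sum_le_sum
        intro y _
        exact mul_le_mul_of_nonneg_left (le_ciSup hbdd y) (hpinn y)
    _ = (1 - pi x) * S := by
        rw [← Finset.sum_mul]
        congr 1
        have := Finset.sum_erase_add Finset.univ pi (Finset.mem_univ x)
        rw [hpisum] at this
        linarith
    _ ≤ S := by nlinarith [hpinn x]

lemma main_ind (hnn : ∀ y z, 0 ≤ P y z) (hrow : ∀ y, ∑ z, P y z = 1)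
    (hpinn : ∀ y, 0 ≤ pi y) (hpisum : ∑ y, pi y = 1)
    (hst : ∀ z, ∑ w, pi w * P w z = pi z)
    {T : ℕ} {γ : ℝ} (hγ0 : 0 < γ) (hγ1 : γ ≤ 1/4)
    (hmix : ∀ y z, (P ^ T) y z ≤ (1 + γ) * pi z)
    (hT1 : 1 ≤ T) (hTpi : (T : ℝ) * pi x ≤ γ / 8) :
    ∀ t, T < t → 0 < noHit P x pi t ∧
      noHit P x pi (t - T) ≤ (1 + γ) * noHit P x pi t := by
  have hpix0 : 0 ≤ pi x := hpinn x
  have hT1' : (1 : ℝ) ≤ (T : ℝ) := by exact_mod_cast hT1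
  have hpixle : pi x ≤ γ / 8 := by nlinarith
  suffices H : ∀ k t, t ≤ k → T < t → 0 < noHit P x pi t ∧
      noHit P x pi (t - T) ≤ (1 + γ) * noHit P x pi t by
    intro t ht
    exact H t t le_rfl ht
  intro k
  induction k with
  | zero => intro t ht0 ht; omega
  | succ k IH =>
    intro t htk ht
    by_cases hcase : t ≤ 2 * T
    · -- base case
      have hlow := noHit_lower (x := x) hnn hpinn hrow hpisum hst t
      have htcast : ((t : ℝ) + 1) ≤ 3 * (T : ℝ) := by
        have h : t + 1 ≤ 3 * T := by omega
        exact_mod_cast h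
      have h1 : 1 - 3 * ((T : ℝ) * pi x) ≤ noHit P x pi t := by nlinarith
      have hpos : 0 < noHit P x pi t := by nlinarith
      refine ⟨hpos, ?_⟩
      have h2 : noHit P x pi (t - T) ≤ noHit P x pi 0 :=
        noHit_antitone hnn hpinn hrow (Nat.zero_le _)
      rw [noHit_zero hpisum] at h2
      nlinarith
    · -- inductive step
      push_neg at hcase
      have htT : T < t - T := by omega
      have htTk : t - T ≤ k := by omega
      obtain ⟨hposA, _⟩ := IH (t - T) htTk htT
      set A := noHit P x pi (t - T) with hA
      set B := noHit P x pi t with hB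
      have htel : ∑ i ∈ Finset.range T,
          (noHit P x pi (t - T + i) - noHit P x pi (t - T + i + 1)) = A - B := by
        rw [tele_sum (noHit P x pi) (t - T) T]
        have h : t - T + T = t := by omega
        rw [h]
      have hterm : ∀ i ∈ Finset.range T,
          noHit P x pi (t - T + i) - noHit P x pi (t - T + i + 1)
            ≤ (1 + γ) * pi x * ((1 + γ) * A) := by
        intro i hi
        have hiT : i < T := Finset.mem_range.mp hi
        have hsT : T ≤ t - T + i := by omega
        have h1 := diff_mix (x := x) hnn hpinn hrow hst hmix hsT
        obtain ⟨hposs, hIH2⟩ := IH (t - T + i) (by omega) (by omega)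
        have hdec : t - T + i - T = (t - T + i) - T := rfl
        have hmono : noHit P x pi (t - T + i) ≤ A :=
          noHit_antitone hnn hpinn hrow (by omega : t - T ≤ t - T + i)
        have c1 : (1 + γ) * pi x * noHit P x pi (t - T + i - T)
            ≤ (1 + γ) * pi x * ((1 + γ) * noHit P x pi (t - T + i)) := by
          apply mul_le_mul_of_nonneg_left hIH2
          exact mul_nonneg (by linarith) hpix0
        have c2 : (1 + γ) * pi x * ((1 + γ) * noHit P x pi (t - T + i))
            ≤ (1 + γ) * pi x * ((1 + γ) * A) := by
          apply mul_le_mul_of_nonneg_left _ (mul_nonneg (by linarith) hpix0)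
          exact mul_le_mul_of_nonneg_left hmono (by linarith)
        linarith
      have hsum := Finset.sum_le_sum hterm
      rw [htel] at hsum
      rw [Finset.sum_const, Finset.card_range, nsmul_eq_mul] at hsum
      -- hsum : A - B ≤ T * ((1+γ) * pi x * ((1+γ) * A))
      have hTpixA : (T : ℝ) * pi x * A ≤ γ / 8 * A :=
        mul_le_mul_of_nonneg_right hTpi hposA.le
      have hTpixA0 : 0 ≤ (T : ℝ) * pi x * A :=
        mul_nonneg (mul_nonneg (by positivity) hpix0) hposA.le
      have hsq : (1 + γ) * (1 + γ) ≤ 2 := by nlinarith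
      have heq : (T : ℝ) * ((1 + γ) * pi x * ((1 + γ) * A))
          = (1 + γ) * (1 + γ) * ((T : ℝ) * pi x * A) := by ring
      have h2a : (1 + γ) * (1 + γ) * ((T : ℝ) * pi x * A) ≤ 2 * ((T : ℝ) * pi x * A) :=
        mul_le_mul_of_nonneg_right hsq hTpixA0
      have hkey : A - B ≤ γ / 4 * A := by
        rw [heq] at hsum
        linarith
      have hgA : γ * A ≤ 1 / 4 * A := mul_le_mul_of_nonneg_right hγ1 hposA.le
      have hgA0 : 0 ≤ γ * A := mul_nonneg hγ0.le hposA.le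
      constructor
      · show 0 < B
        nlinarith
      · show A ≤ (1 + γ) * B
        have hmul : γ * (A - B) ≤ γ * (γ / 4 * A) :=
          mul_le_mul_of_nonneg_left hkey hγ0.le
        have hsqg : γ * (γ * A) ≤ 1 / 4 * (γ * A) :=
          mul_le_mul_of_nonneg_right hγ1 hgA0
        nlinarith [hkey, hmul, hsqg, hgA0, hgA]

end WCS

theorem worst_case_start_matches_stationarity
    (P : (n : ℕ) → Matrix (Fin n) (Fin n) ℝ)
    (pi : (n : ℕ) → Fin n → ℝ)
    (x : (n : ℕ) → Fin n)
    (T : ℕ → ℕ) (c : ℝ)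
    (hc : 2 < c)
    (hT : Filter.Tendsto T Filter.atTop Filter.atTop)
    (hnn : ∀ n : ℕ, 2 ≤ n → ∀ y z : Fin n, 0 ≤ P n y z)
    (hrow : ∀ n : ℕ, 2 ≤ n → ∀ y : Fin n, ∑ z, P n y z = 1)
    (hirr : ∀ n : ℕ, 2 ≤ n → ∀ y z : Fin n, ∃ t : ℕ, 0 < (P n ^ t) y z)
    (hpinn : ∀ n : ℕ, 2 ≤ n → ∀ y : Fin n, 0 ≤ pi n y)
    (hpisum : ∀ n : ℕ, 2 ≤ n → ∑ y, pi n y = 1)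
    (hpistat : ∀ n : ℕ, 2 ≤ n → Matrix.vecMul (pi n) (P n) = pi n)
    (hpiuniq : ∀ n : ℕ, 2 ≤ n → ∀ rho : Fin n → ℝ, (∀ y, 0 ≤ rho y) →
      (∑ y, rho y = 1) → Matrix.vecMul rho (P n) = rho → rho = pi n)
    (hkirr : ∀ n : ℕ, 2 ≤ n → ∀ y z : Fin n, y ≠ x n → z ≠ x n →
      ∃ t : ℕ, 0 < ((killed (P n) (x n)) ^ t) y z)
    (HP1 : ∀ ε : ℝ, 0 < ε → ∃ N : ℕ, ∀ n : ℕ, N ≤ n → ∀ y z : Fin n,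
      (n : ℝ) ^ c * |(P n ^ T n) y z - pi n z| < ε)
    (HP2 : ∀ ε : ℝ, 0 < ε → ∃ N : ℕ, ∀ n : ℕ, N ≤ n → ∀ y : Fin n,
      (T n : ℝ) * pi n y < ε)
    (HP3 : ∀ M : ℝ, ∃ N : ℕ, ∀ n : ℕ, N ≤ n → ∀ y : Fin n,
      M < (n : ℝ) ^ 2 * pi n y)
    :
    ∀ ε : ℝ, 0 < ε → ∃ N : ℕ, ∀ n : ℕ, N ≤ n → ∀ t : ℕ, T n < t →
      |(⨆ y : Fin n, noHit (P n) (x n) (fun z => if z = y then (1 : ℝ) else 0) t)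
        / noHit (P n) (x n) (pi n) t - 1| < ε := by
  intro ε hε
  set d : ℝ := min ε 1 / 4 with hd
  have hmin : 0 < min ε 1 := lt_min hε one_pos
  have hd0 : 0 < d := by rw [hd]; linarith
  have hd1 : d ≤ 1 / 4 := by
    have h := min_le_right ε 1
    rw [hd]; linarith
  have hd2 : 4 * d ≤ ε := by
    have h := min_le_left ε 1
    rw [hd]; linarith
  obtain ⟨N₁, hN₁⟩ := HP1 d hd0
  obtain ⟨N₂, hN₂⟩ := HP3 1
  obtain ⟨N₃, hN₃⟩ := HP2 (d / 8) (by linarith)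
  obtain ⟨N₄, hN₄⟩ := Filter.eventually_atTop.mp (hT.eventually_ge_atTop 1)
  refine ⟨max (max N₁ N₂) (max N₃ (max N₄ 2)), ?_⟩
  intro n hn t ht
  have h2 : 2 ≤ n := by omega
  have hT1 : 1 ≤ T n := hN₄ n (by omega)
  have hTpi : (T n : ℝ) * pi n (x n) ≤ d / 8 := (hN₃ n (by omega) (x n)).le
  have hn0 : (0 : ℝ) < (n : ℝ) := by
    have : (0 : ℕ) < n := by omega
    exact_mod_cast this
  have hn1 : (1 : ℝ) ≤ (n : ℝ) := by
    have : (1 : ℕ) ≤ n := by omega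
    exact_mod_cast this
  have hn2pos : (0 : ℝ) < (n : ℝ) ^ 2 := by positivity
  have hmix : ∀ y z, (P n ^ T n) y z ≤ (1 + d) * pi n z := by
    intro y z
    have habs := hN₁ n (by omega) y z
    have h3 := hN₂ n (by omega) z
    have hnc2 : (n : ℝ) ^ (2 : ℕ) ≤ (n : ℝ) ^ c := by
      calc (n : ℝ) ^ (2 : ℕ) = (n : ℝ) ^ ((2 : ℕ) : ℝ) := (Real.rpow_natCast _ 2).symm
        _ ≤ (n : ℝ) ^ c := Real.rpow_le_rpow_of_exponent_le hn1 (by push_cast; linarith)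
    have hncpos : (0 : ℝ) < (n : ℝ) ^ c := Real.rpow_pos_of_pos hn0 c
    have h4 : |(P n ^ T n) y z - pi n z| < d / (n : ℝ) ^ c := by
      rw [lt_div_iff₀ hncpos]
      linarith [habs, mul_comm ((n : ℝ) ^ c) |(P n ^ T n) y z - pi n z|]
    have h5 : d / (n : ℝ) ^ c ≤ d / (n : ℝ) ^ (2 : ℕ) := by
      apply div_le_div_of_nonneg_left hd0.le hn2pos hnc2
    have h6 : 1 / (n : ℝ) ^ (2 : ℕ) ≤ pi n z := by
      rw [div_le_iff₀ hn2pos]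
      nlinarith
    have h7 : d / (n : ℝ) ^ (2 : ℕ) ≤ d * pi n z := by
      calc d / (n : ℝ) ^ (2 : ℕ) = d * (1 / (n : ℝ) ^ (2 : ℕ)) := by ring
        _ ≤ d * pi n z := mul_le_mul_of_nonneg_left h6 hd0.le
    have h8 := le_abs_self ((P n ^ T n) y z - pi n z)
    nlinarith
  have hst : ∀ z, ∑ w, pi n w * P n w z = pi n z := by
    intro z
    have h := congrFun (hpistat n h2) z
    simpa [Matrix.vecMul, dotProduct] using h
  have hnnn := hnn n h2
  have hrown := hrow n h2
  have hpinnn := hpinn n h2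
  have hpisumn := hpisum n h2
  obtain ⟨hpos, hub⟩ := WCS.main_ind hnnn hrown hpinnn hpisumn hst hd0 hd1 hmix hT1 hTpi t ht
  have hne : Nonempty (Fin n) := ⟨⟨0, by omega⟩⟩
  have hSub : (⨆ y : Fin n, noHit (P n) (x n) (fun z => if z = y then (1 : ℝ) else 0) t)
      ≤ (1 + d) * noHit (P n) (x n) (pi n) (t - T n) :=
    ciSup_le fun y => WCS.delta_le hnnn hpinnn hd0.le hmix ht.le y
  have hSub2 : (⨆ y : Fin n, noHit (P n) (x n) (fun z => if z = y then (1 : ℝ) else 0) t)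
      ≤ (1 + d) * ((1 + d) * noHit (P n) (x n) (pi n) t) :=
    hSub.trans (mul_le_mul_of_nonneg_left hub (by linarith))
  have hlow : noHit (P n) (x n) (pi n) t
      ≤ ⨆ y : Fin n, noHit (P n) (x n) (fun z => if z = y then (1 : ℝ) else 0) t :=
    WCS.pi_le_sup hnnn hpinnn hpisumn t
  set S := ⨆ y : Fin n, noHit (P n) (x n) (fun z => if z = y then (1 : ℝ) else 0) t with hSdef
  set a := noHit (P n) (x n) (pi n) t with ha
  have h1 : 1 ≤ S / a := (one_le_div hpos).mpr hlow
  have h2' : S / a ≤ (1 + d) * (1 + d) := by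
    rw [div_le_iff₀ hpos]
    nlinarith [hSub2]
  rw [abs_of_nonneg (by linarith : (0 : ℝ) ≤ S / a - 1)]
  nlinarith [h1, h2']
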